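/- (Lemma 4.1) Let k > 0 and p, y ∈ ℝ³. Let K : S² × S² → ℂ^{3×3} be a continuous matrix-valued kernel satisfying the reciprocity relation K(x̂,d) = K(−d,−x̂)ᵀ for all x̂, d ∈ S², and such that x̂ · (K(x̂,d)q) = 0 for all x̂, d ∈ S² and all q ∈ ℂ³ with d·q = 0. Let F_K be the integral operator (F_K g)(x̂) = ∫_{S²} K(x̂,d) g(d) dσ(d). Then ∫_{S²} | ∫_{S²} (K(x̂,d)((d×p)×d)) · ((x̂×p)×x̂) e^{ik x̂·y} dσ(x̂) |² dσ(d) = ∫_{S²} | p · (F_K φ_y)(x̂) |² dσ(x̂), where φ_y(d) = (d×p)×d e^{−ik d·y}. -/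

import Mathlib

open MeasureTheory Metric Complex

noncomputable section

abbrev R3 : Type := EuclideanSpace ℝ (Fin 3)
abbrev C3 : Type := EuclideanSpace ℂ (Fin 3)
abbrev S2 : Type := Metric.sphere (0 : R3) 1

/-- The surface measure on the unit sphere `S²` (total mass `4π`). -/
def σS : Measure S2 := (volume : Measure R3).toSphere

/-- Componentwise complexification of a real vector. -/
def cm (x : R3) : C3 := WithLp.toLp 2 (fun i => (x i : ℂ))

/-- Real dot product on `ℝ³`. -/
def dotR (a b : R3) : ℝ := ∑ i, a i * b i

/-- Bilinear (unconjugated) dot product on `ℂ³`. -/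
def dotc (a b : C3) : ℂ := ∑ i, a i * b i

/-- Cross product on `ℂ³`, extended bilinearly. -/
def crossc (a b : C3) : C3 := WithLp.toLp 2 (crossProduct a b)

/-- Hermitian pairing `a · conj b`. -/
def hdot (a b : C3) : ℂ := ∑ i, a i * (starRingEnd ℂ) (b i)

/-- The test function `φ_y(d) = (d×p)×d e^{−ik d·y}`. -/
def phiy (k : ℝ) (p y : R3) (d : S2) : C3 :=
  Complex.exp (-(Complex.I * k * (dotR (d : R3) y))) •
    crossc (crossc (cm (d : R3)) (cm p)) (cm (d : R3))

/-- The Herglotz wave function `(Hg)(x) = ∫_{S²} g(d) e^{ik x·d} dσ(d)`. -/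
def herg (k : ℝ) (g : S2 → C3) (x : R3) : C3 :=
  ∫ d : S2, Complex.exp (Complex.I * k * (dotR x (d : R3))) • g d ∂σS

open Classical in
/-- The `L²` class of a function (`0` if the function is not square integrable). -/
def toL2 {α : Type} [MeasurableSpace α] (μ : Measure α) (f : α → C3) : Lp C3 2 μ :=
  if h : MemLp f 2 μ then h.toLp f else 0

/-- `(H^*f)(d) = d × (∫_Ω f(x) e^{−ik x·d} dx) × d`. -/
def hergSt (k : ℝ) (Ω : Set R3) (f : R3 → C3) (d : S2) : C3 :=
  crossc (crossc (cm (d : R3))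
    (∫ x in Ω, Complex.exp (-(Complex.I * k * (dotR x (d : R3)))) • f x)) (cm (d : R3))

/-- The operator `F` built from the factorization `F = H^* T H`:
`(Fg)(d) = d × (∫_Ω (T(Hg))(x) e^{−ik x·d} dx) × d`. -/
def Fop (k : ℝ) (Ω : Set R3)
    (T : Lp C3 2 (volume.restrict Ω) →L[ℂ] Lp C3 2 (volume.restrict Ω))
    (g : S2 → C3) (d : S2) : C3 :=
  crossc (crossc (cm (d : R3))
    (∫ x in Ω, Complex.exp (-(Complex.I * k * (dotR x (d : R3)))) •
      (T (toL2 (volume.restrict Ω) (herg k g))) x)) (cm (d : R3))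

/-- The OSM imaging functional `I_OSM(y) = ∫_{S²} |p·(Fφ_y)(x̂)|² dσ(x̂)`. -/
def IOSM (k : ℝ) (Ω : Set R3)
    (T : Lp C3 2 (volume.restrict Ω) →L[ℂ] Lp C3 2 (volume.restrict Ω))
    (p y : R3) : ℝ :=
  ∫ xh : S2, ‖dotc (cm p) (Fop k Ω T (phiy k p y) xh)‖ ^ 2 ∂σS

/-- The DSM imaging functional `I_DSM(y) = |⟨Fφ_y, φ_y⟩_{L²(S²)}|`. -/
def IDSM (k : ℝ) (Ω : Set R3)
    (T : Lp C3 2 (volume.restrict Ω) →L[ℂ] Lp C3 2 (volume.restrict Ω))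
    (p y : R3) : ℝ :=
  ‖∫ d : S2, hdot (Fop k Ω T (phiy k p y) d) (phiy k p y d) ∂σS‖

/-- The set `H(L²_t(S²)) ⊂ L²(Ω,ℂ³)`: images under the Herglotz operator of square
integrable tangential fields. -/
def ranHt (k : ℝ) (Ω : Set R3) : Set (Lp C3 2 (volume.restrict Ω)) :=
  {h | ∃ g : S2 → C3, MemLp g 2 σS ∧ (∀ᵐ (d : S2) ∂σS, dotc (cm d.val) (g d) = 0) ∧
    h = toL2 (volume.restrict Ω) (herg k g)}


/-- Antipodal map on the unit sphere. -/
def negS (d : S2) : S2 :=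
  ⟨-(d : R3), by
    rw [mem_sphere_zero_iff_norm, norm_neg, ← mem_sphere_zero_iff_norm]; exact d.2⟩

/-- A `3×3` complex matrix acting on `ℂ³`. -/
def mvec (M : Matrix (Fin 3) (Fin 3) ℂ) (v : C3) : C3 := WithLp.toLp 2 (M.mulVec v)


section Aux

/-- `(x×p)×x`, complexified. -/
def vv (p : R3) (x : S2) : C3 := crossc (crossc (cm (x : R3)) (cm p)) (cm (x : R3))

lemma phiy_eq (k : ℝ) (p y : R3) (d : S2) :
    phiy k p y d = Complex.exp (-(Complex.I * k * (dotR (d : R3) y))) • vv p d := rfl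

lemma dotc_smul_right (a : C3) (c : ℂ) (b : C3) : dotc a (c • b) = c * dotc a b := by
  simp [dotc, Fin.sum_univ_three, smul_eq_mul]
  ring

lemma mvec_smul (M : Matrix (Fin 3) (Fin 3) ℂ) (c : ℂ) (v : C3) :
    mvec M (c • v) = c • mvec M v := by
  ext i
  simp [mvec, Matrix.mulVec, dotProduct, Fin.sum_univ_three, smul_eq_mul]
  ring

lemma dotc_mvec_transpose (M : Matrix (Fin 3) (Fin 3) ℂ) (a b : C3) :
    dotc (mvec M.transpose a) b = dotc a (mvec M b) := by
  simp [dotc, mvec, Matrix.mulVec, dotProduct, Fin.sum_univ_three,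
    Matrix.transpose_apply]
  ring

lemma dotc_tangent_vv (p : R3) (d : S2) : dotc (cm (d : R3)) (vv p d) = 0 := by
  simp [dotc, vv, crossc, cross_apply, Fin.sum_univ_three, cm]
  ring

lemma dotc_tangent_phiy (k : ℝ) (p y : R3) (d : S2) :
    dotc (cm (d : R3)) (phiy k p y d) = 0 := by
  rw [phiy_eq, dotc_smul_right, dotc_tangent_vv, mul_zero]

lemma negS_coe (x : S2) : ((negS x : S2) : R3) = -(x : R3) := rfl

lemma negS_negS (d : S2) : negS (negS d) = d := by ext; simp [negS]

lemma vv_neg (p : R3) (x : S2) : vv p (negS x) = vv p x := by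
  ext i
  simp [vv, negS, crossc, cross_apply, cm]
  fin_cases i <;> simp <;> ring_nf

lemma dotR_negS (x : S2) (y : R3) : dotR ((negS x : S2) : R3) y = -dotR (x : R3) y := by
  simp [negS, dotR, Fin.sum_univ_three]

lemma sphere_sq_sum (x : S2) :
    ((x : R3) 0) ^ 2 + ((x : R3) 1) ^ 2 + ((x : R3) 2) ^ 2 = 1 := by
  have := mem_sphere_zero_iff_norm.mp x.2
  rw [EuclideanSpace.norm_eq] at this
  have h1 : Real.sqrt (∑ i : Fin 3, (x : R3) i ^ 2) = 1 := by simpa [sq_abs] using this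
  have h0 : (0 : ℝ) ≤ ∑ i : Fin 3, (x : R3) i ^ 2 :=
    Finset.sum_nonneg fun i _ => sq_nonneg _
  have h2 : (∑ i : Fin 3, (x : R3) i ^ 2) = 1 := by nlinarith [Real.sq_sqrt h0]
  simpa [Fin.sum_univ_three] using h2

/-- Decomposition `p = (x×p)×x + (x·p) x` along the sphere. -/
lemma dotc_cm_decomp (p : R3) (x : S2) (w : C3) :
    dotc (cm p) w = dotc (vv p x) w + ((dotR (x : R3) p : ℝ) : ℂ) * dotc (cm (x : R3)) w := by
  have hx : (((x : R3) 0 : ℂ)) ^ 2 + (((x : R3) 1 : ℂ)) ^ 2 + (((x : R3) 2 : ℂ)) ^ 2 = 1 := by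
    have h := congrArg (fun r : ℝ => (r : ℂ)) (sphere_sq_sum x)
    push_cast at h
    exact h
  simp only [dotc, vv, crossc, cross_apply, dotR, Fin.sum_univ_three, cm,
    Matrix.cons_val_zero, Matrix.cons_val_one, Matrix.head_cons, Matrix.cons_val_two,
    Matrix.tail_cons]
  push_cast
  linear_combination (-1 : ℂ) * (((p 0 : ℂ)) * w 0 + ((p 1 : ℂ)) * w 1 + ((p 2 : ℂ)) * w 2) * hx

lemma negS_cont : Continuous negS :=
  Continuous.subtype_mk (continuous_neg.comp continuous_subtype_val) _

/-- The antipodal map as a measurable equivalence. -/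
def negE : S2 ≃ᵐ S2 where
  toFun := negS
  invFun := negS
  left_inv := negS_negS
  right_inv := negS_negS
  measurable_toFun := negS_cont.measurable
  measurable_invFun := negS_cont.measurable

open scoped Pointwise in
lemma negS_mp : MeasurePreserving negS σS σS := by
  refine ⟨negS_cont.measurable, ?_⟩
  ext s hs
  rw [Measure.map_apply negS_cont.measurable hs]
  have hpre : MeasurableSet (negS ⁻¹' s) := negS_cont.measurable hs
  rw [σS, Measure.toSphere_apply' _ hpre, Measure.toSphere_apply' _ hs]
  congr 1
  have himg : (Subtype.val '' (negS ⁻¹' s) : Set R3) = -(Subtype.val '' s) := by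
    ext z
    simp only [Set.mem_image, Set.mem_preimage, Set.mem_neg]
    constructor
    · rintro ⟨u, hu, rfl⟩
      exact ⟨negS u, hu, rfl⟩
    · rintro ⟨u, hu, h⟩
      exact ⟨negS u, by show negS (negS u) ∈ s; rw [negS_negS]; exact hu,
        by simp [negS, h]⟩
  rw [himg, Set.smul_neg, Measure.measure_neg]

instance : IsFiniteMeasure σS := by unfold σS; infer_instance

lemma integral_negS {E : Type*} [NormedAddCommGroup E] [NormedSpace ℝ E] (f : S2 → E) :
    ∫ x, f (negS x) ∂σS = ∫ x, f x ∂σS :=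
  negS_mp.integral_comp (negE.measurableEmbedding) f

lemma cont_cm : Continuous cm := by unfold cm; fun_prop

lemma cont_crossc : Continuous (fun q : C3 × C3 => crossc q.1 q.2) := by
  unfold crossc
  simp only [cross_apply]
  refine (PiLp.continuous_toLp _ _).comp ?_
  apply continuous_pi
  intro i
  fin_cases i <;> simp <;> fun_prop

lemma cont_dotR (y : R3) : Continuous (fun x : R3 => dotR x y) := by unfold dotR; fun_prop

lemma cont_mvec : Continuous (fun q : Matrix (Fin 3) (Fin 3) ℂ × C3 => mvec q.1 q.2) := by
  unfold mvec
  refine (PiLp.continuous_toLp _ _).comp ?_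
  apply continuous_pi
  intro i
  simp only [Matrix.mulVec, dotProduct, Fin.sum_univ_three]
  fun_prop

lemma cont_vv (p : R3) : Continuous (vv p) := by
  have h1 : Continuous (fun x : S2 => cm (x : R3)) := cont_cm.comp continuous_subtype_val
  have h2 : Continuous (fun x : S2 => crossc (cm (x : R3)) (cm p)) :=
    cont_crossc.comp (h1.prodMk (continuous_const (y := cm p)))
  show Continuous ((fun q : C3 × C3 => crossc q.1 q.2) ∘
    (fun x : S2 => (crossc (cm (x : R3)) (cm p), cm (x : R3))))
  exact cont_crossc.comp (h2.prodMk h1)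

lemma cont_phiy (k : ℝ) (p y : R3) : Continuous (phiy k p y) := by
  have hd : Continuous fun d : S2 => dotR (d : R3) y :=
    (cont_dotR y).comp continuous_subtype_val
  have h1 : Continuous fun d : S2 =>
      Complex.exp (-(Complex.I * k * (dotR (d : R3) y))) := by fun_prop
  have := cont_vv p
  have h2 : Continuous fun d : S2 => crossc (crossc (cm (d : R3)) (cm p)) (cm (d : R3)) := this
  exact h1.smul h2

lemma integrable_mvec_phiy (k : ℝ) (p y : R3) (K : S2 → S2 → Matrix (Fin 3) (Fin 3) ℂ)
    (hKcont : Continuous (fun q : S2 × S2 => K q.1 q.2)) (x : S2) :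
    Integrable (fun d => mvec (K x d) (phiy k p y d)) σS := by
  have hc : Continuous fun d : S2 => mvec (K x d) (phiy k p y d) := by
    have hK : Continuous fun d : S2 => K x d :=
      hKcont.comp (continuous_const.prodMk continuous_id)
    exact cont_mvec.comp (hK.prodMk (cont_phiy k p y))
  exact hc.integrable_of_hasCompactSupport (HasCompactSupport.of_compactSpace _)

lemma dotc_integral (p : R3) (f : S2 → C3) (hf : Integrable f σS) :
    dotc (cm p) (∫ d, f d ∂σS) = ∫ d, dotc (cm p) (f d) ∂σS := by
  have key : ∀ w : C3, dotc (cm p) w = (innerSL ℂ (cm p)) w := by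
    intro w
    simp [dotc, innerSL_apply_apply, PiLp.inner_apply, cm, Complex.conj_ofReal]
    exact Finset.sum_congr rfl fun i _ => mul_comm _ _
  rw [key]
  rw [← ContinuousLinearMap.integral_comp_comm (innerSL ℂ (cm p)) hf]
  exact integral_congr_ae (Filter.Eventually.of_forall fun d => (key (f d)).symm)

def GG (k : ℝ) (p y : R3) (K : S2 → S2 → Matrix (Fin 3) (Fin 3) ℂ) (x d : S2) : ℂ :=
  dotc (vv p x) (mvec (K x d) (phiy k p y d))

def RRi (k : ℝ) (p y : R3) (K : S2 → S2 → Matrix (Fin 3) (Fin 3) ℂ) (x : S2) : ℂ :=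
  ∫ d, GG k p y K x d ∂σS

end Aux

/-- **Lemma 4.1.** -/
theorem stmt6 (k : ℝ) (hk : 0 < k) (p y : R3)
    (K : S2 → S2 → Matrix (Fin 3) (Fin 3) ℂ)
    (hKcont : Continuous (fun q : S2 × S2 => K q.1 q.2))
    (hKrec : ∀ xh d : S2, K xh d = (K (negS d) (negS xh)).transpose)
    (hKtan : ∀ (xh d : S2) (q : C3),
      dotc (cm d.val) q = 0 → dotc (cm xh.val) (mvec (K xh d) q) = 0) :
    (∫ d : S2, ‖∫ xh : S2,
        dotc (mvec (K xh d) (crossc (crossc (cm d.val) (cm p)) (cm d.val)))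
          (crossc (crossc (cm xh.val) (cm p)) (cm xh.val)) *
          Complex.exp (Complex.I * k * dotR xh.val y) ∂σS‖ ^ 2 ∂σS) =
      ∫ xh : S2, ‖dotc (cm p) (∫ d : S2, mvec (K xh d) (phiy k p y d) ∂σS)‖ ^ 2 ∂σS := by
  classical
  have hvv : ∀ x : S2, crossc (crossc (cm x.val) (cm p)) (cm x.val) = vv p x := fun _ => rfl
  have key2 : ∀ x : S2,
      dotc (cm p) (∫ d, mvec (K x d) (phiy k p y d) ∂σS) = RRi k p y K x := by
    intro x
    rw [dotc_integral p _ (integrable_mvec_phiy k p y K hKcont x)]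
    refine integral_congr_ae (Filter.Eventually.of_forall fun d => ?_)
    show dotc (cm p) (mvec (K x d) (phiy k p y d)) = GG k p y K x d
    have htan : dotc (cm (x : R3)) (mvec (K x d) (phiy k p y d)) = 0 :=
      hKtan x d (phiy k p y d) (dotc_tangent_phiy k p y d)
    rw [GG, dotc_cm_decomp p x, htan, mul_zero, add_zero]
  have key1 : ∀ d : S2,
      (∫ x : S2, dotc (mvec (K x d) (vv p d)) (vv p x) *
        Complex.exp (Complex.I * k * dotR (x : R3) y) ∂σS) = RRi k p y K (negS d) := by
    intro d
    rw [RRi]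
    rw [← integral_negS (fun x : S2 => dotc (mvec (K x d) (vv p d)) (vv p x) *
      Complex.exp (Complex.I * k * dotR (x : R3) y))]
    refine integral_congr_ae (Filter.Eventually.of_forall fun x => ?_)
    show dotc (mvec (K (negS x) d) (vv p d)) (vv p (negS x)) *
        Complex.exp (Complex.I * k * dotR ((negS x : S2) : R3) y) = GG k p y K (negS d) x
    have hK : K (negS x) d = (K (negS d) x).transpose := by
      rw [hKrec (negS x) d, negS_negS]
    calc dotc (mvec (K (negS x) d) (vv p d)) (vv p (negS x)) *
          Complex.exp (Complex.I * k * dotR ((negS x : S2) : R3) y)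
        = dotc (vv p d) (mvec (K (negS d) x) (vv p x)) *
          Complex.exp (-(Complex.I * k * dotR (x : R3) y)) := by
          rw [hK, dotc_mvec_transpose, vv_neg, dotR_negS]
          push_cast
          ring_nf
      _ = GG k p y K (negS d) x := by
          rw [GG]
          simp only [phiy_eq, vv_neg, mvec_smul, dotc_smul_right]
          ring
  simp only [hvv, key1, key2]
  exact integral_negS (fun d => ‖RRi k p y K d‖ ^ 2)
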